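/- Let X be a strongly regular graph with parameters (v,k,λ,μ), and let H be an induced subgraph of X on m vertices with d_i vertices of degree i (within H). For j = 0,...,m let b_j be the number of vertices of X outside H with exactly j neighbors in H. Then: (1) Σ_j b_j = v - m; (2) Σ_j j·b_j = m·k - Σ_i i·d_i; (3) Σ_j C(j,2)·b_j = C(m,2)·μ - Σ_i C(i,2)·d_i + (1/2)(λ-μ)·Σ_i i·d_i. -/
import Mathlib


open Finset

private lemma fib_sum {V : Type*} [DecidableEq V] {M : Type*} [AddCommMonoid M]
    (s : Finset V) (g : V → ℕ) (N : ℕ)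
    (hs : ∀ x ∈ s, g x ∈ Finset.range N) (F : ℕ → M) :
    ∑ j ∈ Finset.range N, (s.filter (fun x => g x = j)).card • F j = ∑ x ∈ s, F (g x) := by
  rw [← Finset.sum_fiberwise_of_maps_to hs (fun x => F (g x))]
  refine Finset.sum_congr rfl fun j _ => ?_
  rw [Finset.sum_congr rfl (fun x hx => by rw [(Finset.mem_filter.mp hx).2]),
    Finset.sum_const]

private lemma cast_mul_pred (a : ℕ) : ((a * (a - 1) : ℕ) : ℚ) = (a : ℚ) * ((a : ℚ) - 1) := by
  rcases Nat.eq_zero_or_pos a with h | h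
  · simp [h]
  · push_cast [Nat.cast_sub h]
    ring

/-- Counting identities relating the degree distribution inside an induced subgraph `H`
of a strongly regular graph and the distribution of outside vertices by their number
of neighbors in `H`. -/
theorem stmt2 {V : Type*} [Fintype V] [DecidableEq V]
    (G : SimpleGraph V) [DecidableRel G.Adj]
    (n k l mu : ℕ) (hG : G.IsSRGWith n k l mu)
    (H : Finset V) (d b : ℕ → ℕ)
    (hd : ∀ i, d i = (H.filter (fun x => (H.filter (fun y => G.Adj x y)).card = i)).card)
    (hb : ∀ j, b j = ((univ \ H).filter (fun x => (H.filter (fun y => G.Adj x y)).card = j)).card) :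
    (∑ j ∈ Finset.range (H.card + 1), b j = n - H.card) ∧
    (∑ j ∈ Finset.range (H.card + 1), j * b j
        = H.card * k - ∑ i ∈ Finset.range H.card, i * d i) ∧
    (∑ j ∈ Finset.range (H.card + 1), (j.choose 2 : ℚ) * b j
        = (H.card.choose 2 : ℚ) * mu - ∑ i ∈ Finset.range H.card, (i.choose 2 : ℚ) * d i
          + ((l : ℚ) - mu) / 2 * ∑ i ∈ Finset.range H.card, (i : ℚ) * d i) := by
  set m := H.card with hm
  set deg : V → ℕ := fun x => (H.filter (fun y => G.Adj x y)).card with hdeg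
  -- basic bounds on deg
  have h1 : ∀ x : V, deg x ∈ Finset.range (m + 1) := by
    intro x
    simp only [Finset.mem_range, Nat.lt_succ_iff]
    exact Finset.card_le_card (Finset.filter_subset _ _)
  have h2 : ∀ x ∈ H, deg x ∈ Finset.range m := by
    intro x hx
    have hsub : H.filter (fun y => G.Adj x y) ⊆ H.erase x := by
      intro y hy
      rw [Finset.mem_filter] at hy
      exact Finset.mem_erase.mpr ⟨fun h => G.irrefl (h ▸ hy.2), hy.1⟩
    have := Finset.card_le_card hsub
    rw [Finset.card_erase_of_mem hx] at this
    have hmpos : 0 < m := Finset.card_pos.mpr ⟨x, hx⟩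
    exact Finset.mem_range.mpr (lt_of_le_of_lt this (Nat.sub_lt hmpos one_pos))
  -- fiber sums
  have hbsum : ∀ (F : ℕ → ℚ), ∑ j ∈ Finset.range (m + 1), F j * b j
      = ∑ x ∈ univ \ H, F (deg x) := by
    intro F
    rw [← fib_sum (univ \ H) deg (m + 1) (fun x _ => h1 x) F]
    refine Finset.sum_congr rfl fun j _ => ?_
    rw [hb j, nsmul_eq_mul, mul_comm]
  have hdsum : ∀ (F : ℕ → ℚ), ∑ i ∈ Finset.range m, F i * d i
      = ∑ x ∈ H, F (deg x) := by
    intro F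
    rw [← fib_sum H deg m h2 F]
    refine Finset.sum_congr rfl fun j _ => ?_
    rw [hd j, nsmul_eq_mul, mul_comm]
  -- part 1
  have part1 : ∑ j ∈ Finset.range (m + 1), b j = n - m := by
    have := Finset.card_eq_sum_card_fiberwise (f := deg) (s := univ \ H)
      (t := Finset.range (m + 1)) (fun x _ => h1 x)
    rw [Finset.card_sdiff_of_subset (Finset.subset_univ H), Finset.card_univ, hG.card, ← hm] at this
    rw [Finset.sum_congr rfl fun j _ => hb j, ← this]
  -- total degree sum
  have htot : ∑ x : V, deg x = m * k := by
    have hdx : ∀ x : V, deg x = ∑ y ∈ H, if G.Adj x y then 1 else 0 := fun x =>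
      Finset.card_filter _ _
    calc ∑ x : V, deg x = ∑ x : V, ∑ y ∈ H, if G.Adj x y then 1 else 0 :=
          Finset.sum_congr rfl fun x _ => hdx x
      _ = ∑ y ∈ H, ∑ x : V, if G.Adj x y then 1 else 0 := Finset.sum_comm
      _ = ∑ y ∈ H, k := by
          refine Finset.sum_congr rfl fun y hy => ?_
          have : ∑ x : V, (if G.Adj x y then 1 else 0)
              = (univ.filter (fun x => G.Adj y x)).card := by
            rw [Finset.card_filter]
            exact Finset.sum_congr rfl fun x _ => if_congr (G.adj_comm x y) rfl rfl
          rw [this, ← SimpleGraph.neighborFinset_eq_filter]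
          exact hG.regular y
      _ = m * k := by rw [Finset.sum_const, smul_eq_mul]
  have hb1 : ∑ j ∈ Finset.range (m + 1), j * b j = ∑ x ∈ univ \ H, deg x := by
    rw [← fib_sum (univ \ H) deg (m + 1) (fun x _ => h1 x) (fun j => j)]
    exact Finset.sum_congr rfl fun j _ => by rw [hb j, smul_eq_mul, mul_comm]
  have hd1 : ∑ i ∈ Finset.range m, i * d i = ∑ x ∈ H, deg x := by
    rw [← fib_sum H deg m h2 (fun j => j)]
    exact Finset.sum_congr rfl fun j _ => by rw [hd j, smul_eq_mul, mul_comm]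
  have hsplit : ∑ x ∈ univ \ H, deg x + ∑ x ∈ H, deg x = m * k := by
    rw [Finset.sum_sdiff (Finset.subset_univ H), htot]
  have part2 : ∑ j ∈ Finset.range (m + 1), j * b j
      = m * k - ∑ i ∈ Finset.range m, i * d i := by
    refine Nat.eq_sub_of_add_eq ?_
    rw [hb1, hd1, hsplit]
  -- part 3 : the key counting identity over ℕ
  set S1 : ℕ := ∑ x ∈ H, deg x with hS1
  have key : ∑ x : V, deg x * (deg x - 1) + mu * S1 = l * S1 + mu * (m * (m - 1)) := by
    -- step 1 : per-vertex pair count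
    have step1 : ∀ x : V, deg x * (deg x - 1)
        = ∑ y ∈ H, ∑ z ∈ H, if y ≠ z ∧ G.Adj x y ∧ G.Adj x z then 1 else 0 := by
      intro x
      have inner : ∀ y ∈ H, (∑ z ∈ H, if y ≠ z ∧ G.Adj x y ∧ G.Adj x z then (1:ℕ) else 0)
          = (if G.Adj x y then 1 else 0) * (deg x - 1) := by
        intro y hy
        by_cases hxy : G.Adj x y
        · rw [if_pos hxy, one_mul, ← Finset.card_filter]
          have hset : H.filter (fun z => y ≠ z ∧ G.Adj x y ∧ G.Adj x z)
              = (H.filter (fun z => G.Adj x z)).erase y := by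
            ext z
            simp only [Finset.mem_filter, Finset.mem_erase]
            constructor
            · rintro ⟨hz, hyz, -, haz⟩; exact ⟨fun h => hyz h.symm, hz, haz⟩
            · rintro ⟨hzy, hz, haz⟩; exact ⟨hz, fun h => hzy h.symm, hxy, haz⟩
          rw [hset, Finset.card_erase_of_mem (Finset.mem_filter.mpr ⟨hy, hxy⟩)]
        · rw [if_neg hxy, zero_mul]
          refine Finset.sum_eq_zero fun z _ => ?_
          rw [if_neg]; tauto
      have : (∑ y ∈ H, ∑ z ∈ H, if y ≠ z ∧ G.Adj x y ∧ G.Adj x z then (1:ℕ) else 0)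
          = deg x * (deg x - 1) := by
        rw [Finset.sum_congr rfl inner, ← Finset.sum_mul, ← Finset.card_filter]
      exact this.symm
    -- step 3 : common neighbor counts
    have step3 : ∀ y ∈ H, ∀ z ∈ H,
        (∑ x : V, if y ≠ z ∧ G.Adj x y ∧ G.Adj x z then (1:ℕ) else 0)
          = if y ≠ z then (if G.Adj y z then l else mu) else 0 := by
      intro y _ z _
      by_cases hyz : y = z
      · simp [hyz]
      · have hcount : (∑ x : V, if y ≠ z ∧ G.Adj x y ∧ G.Adj x z then (1:ℕ) else 0)
            = Fintype.card (G.commonNeighbors y z) := by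
          rw [Fintype.card_subtype, Finset.card_filter]
          refine Finset.sum_congr rfl fun x _ => ?_
          congr 1
          simp only [SimpleGraph.mem_commonNeighbors, eq_iff_iff]
          constructor
          · rintro ⟨-, h1, h2⟩; exact ⟨h1.symm, h2.symm⟩
          · rintro ⟨h1, h2⟩; exact ⟨hyz, h1.symm, h2.symm⟩
        rw [hcount, if_pos hyz]
        by_cases hadj : G.Adj y z
        · rw [if_pos hadj, hG.of_adj y z hadj]
        · rw [if_neg hadj, hG.of_not_adj hyz hadj]
    -- combine
    have hswap : ∑ x : V, deg x * (deg x - 1)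
        = ∑ y ∈ H, ∑ z ∈ H, if y ≠ z then (if G.Adj y z then l else mu) else 0 := by
      rw [Finset.sum_congr rfl (fun x _ => step1 x)]
      rw [Finset.sum_comm]
      refine Finset.sum_congr rfl fun y hy => ?_
      rw [Finset.sum_comm]
      exact Finset.sum_congr rfl fun z hz => step3 y hy z hz
    -- split the inner ite
    have hsplit2 : ∀ y z : V, (if y ≠ z then (if G.Adj y z then l else mu) else 0)
        = (if G.Adj y z then l else 0) + (if y ≠ z ∧ ¬ G.Adj y z then mu else 0) := by
      intro y z
      by_cases hadj : G.Adj y z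
      · simp [hadj, G.ne_of_adj hadj]
      · by_cases hyz : y = z <;> simp [hadj, hyz]
    have hA : ∑ y ∈ H, ∑ z ∈ H, (if G.Adj y z then (1:ℕ) else 0) = S1 := by
      refine Finset.sum_congr rfl fun y _ => ?_
      rw [← Finset.card_filter]
    have hAB : (∑ y ∈ H, ∑ z ∈ H, (if G.Adj y z then (1:ℕ) else 0))
        + ∑ y ∈ H, ∑ z ∈ H, (if y ≠ z ∧ ¬ G.Adj y z then (1:ℕ) else 0)
        = m * (m - 1) := by
      rw [← Finset.sum_add_distrib]
      simp_rw [← Finset.sum_add_distrib]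
      have : ∀ y ∈ H, ∀ z ∈ H, ((if G.Adj y z then (1:ℕ) else 0)
          + if y ≠ z ∧ ¬ G.Adj y z then (1:ℕ) else 0) = if y ≠ z then 1 else 0 := by
        intro y _ z _
        by_cases hadj : G.Adj y z
        · simp [hadj, G.ne_of_adj hadj]
        · by_cases hyz : y = z <;> simp [hadj, hyz]
      rw [Finset.sum_congr rfl fun y hy => Finset.sum_congr rfl fun z hz => this y hy z hz]
      have : ∀ y ∈ H, ∑ z ∈ H, (if y ≠ z then (1:ℕ) else 0) = m - 1 := by
        intro y hy
        rw [← Finset.card_filter, Finset.filter_ne, Finset.card_erase_of_mem hy]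
      rw [Finset.sum_congr rfl this, Finset.sum_const, smul_eq_mul]
    have hLsum : ∑ y ∈ H, ∑ z ∈ H, (if G.Adj y z then l else 0)
        = l * S1 := by
      rw [← hA, Finset.mul_sum]
      refine Finset.sum_congr rfl fun y _ => ?_
      rw [Finset.mul_sum]
      exact Finset.sum_congr rfl fun z _ => by rw [mul_ite, mul_one, mul_zero]
    have hMsum : ∑ y ∈ H, ∑ z ∈ H, (if y ≠ z ∧ ¬ G.Adj y z then mu else 0)
        = mu * (∑ y ∈ H, ∑ z ∈ H, (if y ≠ z ∧ ¬ G.Adj y z then (1:ℕ) else 0)) := by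
      rw [Finset.mul_sum]
      refine Finset.sum_congr rfl fun y _ => ?_
      rw [Finset.mul_sum]
      exact Finset.sum_congr rfl fun z _ => by rw [mul_ite, mul_one, mul_zero]
    rw [hswap]
    simp_rw [hsplit2]
    rw [Finset.sum_congr rfl (fun y _ => Finset.sum_add_distrib), Finset.sum_add_distrib,
      hLsum, hMsum, ← hAB, hA]
    ring
  -- now conclude part 3 over ℚ
  have part3 : ∑ j ∈ Finset.range (m + 1), (j.choose 2 : ℚ) * b j
      = (m.choose 2 : ℚ) * mu - ∑ i ∈ Finset.range m, (i.choose 2 : ℚ) * d i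
        + ((l : ℚ) - mu) / 2 * ∑ i ∈ Finset.range m, (i : ℚ) * d i := by
    rw [hbsum (fun j => (j.choose 2 : ℚ)), hdsum (fun i => (i.choose 2 : ℚ)),
      hdsum (fun i => (i : ℚ))]
    have hsd : ∑ x ∈ univ \ H, ((deg x).choose 2 : ℚ)
        = ∑ x : V, ((deg x).choose 2 : ℚ) - ∑ x ∈ H, ((deg x).choose 2 : ℚ) := by
      rw [eq_sub_iff_add_eq, Finset.sum_sdiff (Finset.subset_univ H)]
    rw [hsd]
    have hchoose : ∀ s : Finset V, ∑ x ∈ s, ((deg x).choose 2 : ℚ)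
        = (↑(∑ x ∈ s, deg x * (deg x - 1)) : ℚ) / 2 := by
      intro s
      rw [Nat.cast_sum, Finset.sum_div]
      refine Finset.sum_congr rfl fun x _ => ?_
      rw [Nat.cast_choose_two, cast_mul_pred]
    have hkeyQ : (↑(∑ x : V, deg x * (deg x - 1)) : ℚ)
        = (l : ℚ) * S1 + mu * (m * ((m:ℚ) - 1)) - mu * S1 := by
      have h2 : (↑(∑ x : V, deg x * (deg x - 1)) : ℚ) + mu * S1
          = l * S1 + mu * ↑(m * (m - 1)) := by exact_mod_cast key
      rw [cast_mul_pred m] at h2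
      linarith
    have hS1Q : (S1 : ℚ) = ∑ x ∈ H, (deg x : ℚ) := by
      rw [hS1]; push_cast; rfl
    rw [hchoose univ, hchoose H, hkeyQ, Nat.cast_choose_two, ← hS1Q]
    ring
  exact ⟨part1, part2, part3⟩
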